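/- Let k, t, s, n be positive integers with t ≤ k−1, s ≤ k ≤ n, let δ ∈ [0,1] be real, and let x be a real number with k ≤ x ≤ n. If ∏_{i=t}^{k−1} (x−i)/(n−i) ≥ δ, then ∏_{i=0}^{s−1} (x−i)/(n−i) ≥ δ^(s/(k−t)). -/

import Mathlib

open Finset

/-- The `s`-shadow of a hypergraph `H`: all `s`-element vertex sets contained in
some edge of `H`. -/
def hShadow {V : Type*} [DecidableEq V] (s : ℕ) (H : Finset (Finset V)) :
    Finset (Finset V) :=
  H.biUnion fun e => e.powersetCard s

/-- One step of `t`-tight connectivity: both `a` and `b` are edges of `H` and they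
share at least `t` vertices. -/
def TightStep {V : Type*} [DecidableEq V] (t : ℕ) (H : Finset (Finset V))
    (a b : Finset V) : Prop :=
  a ∈ H ∧ b ∈ H ∧ t ≤ (a ∩ b).card

/-- Two edges lie in the same `t`-tight component iff they are joined by a chain of
edges, consecutive ones sharing at least `t` vertices. -/
def TightConn {V : Type*} [DecidableEq V] (t : ℕ) (H : Finset (Finset V)) :
    Finset V → Finset V → Prop :=
  Relation.ReflTransGen (TightStep t H)

open scoped Classical in
/-- The `t`-tight component of the edge `e` in the hypergraph `H`. -/
noncomputable def tightComponent {V : Type*} [DecidableEq V] (t : ℕ)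
    (H : Finset (Finset V)) (e : Finset V) : Finset (Finset V) :=
  H.filter fun f => TightConn t H e f

/-- The `k`-uniform hypergraph `H i` of edges of `K^k_n` having color `i` under the
coloring `c`. -/
def colorClass (n r k : ℕ) (c : Finset (Fin n) → Fin r) (i : Fin r) :
    Finset (Finset (Fin n)) :=
  (Finset.univ.powersetCard k).filter fun e => c e = i

/-- `M(n,r,k,t,s;c)`: the largest number of vertex `s`-sets contained in the edges of
a monochromatic `t`-tight component of the `r`-coloring `c` of `K^k_n`. -/
noncomputable def Mcol (n r k t s : ℕ) (c : Finset (Fin n) → Fin r) : ℕ :=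
  Finset.univ.sup fun i : Fin r =>
    (colorClass n r k c i).sup fun e =>
      (hShadow s (tightComponent t (colorClass n r k c i) e)).card

/-- `M(n,r,k,t,s)`: the minimum of `M(n,r,k,t,s;c)` over all `r`-colorings `c` of
`K^k_n`. -/
noncomputable def Mmin (n r k t s : ℕ) : ℕ :=
  sInf {m | ∃ c : Finset (Fin n) → Fin r, Mcol n r k t s c = m}

/-- **Product inequality.** If `t ≤ k-1`, `s ≤ k ≤ n` are positive integers,
`δ ∈ [0,1]`, `k ≤ x ≤ n`, and `∏_{i=t}^{k-1} (x-i)/(n-i) ≥ δ`, then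
`∏_{i=0}^{s-1} (x-i)/(n-i) ≥ δ^(s/(k-t))`. -/
theorem statement16 (k t s n : ℕ) (ht : 0 < t) (hs : 0 < s) (htk : t + 1 ≤ k)
    (hsk : s ≤ k) (hkn : k ≤ n) (δ : ℝ) (hδ0 : 0 ≤ δ) (hδ1 : δ ≤ 1)
    (x : ℝ) (hx1 : (k : ℝ) ≤ x) (hx2 : x ≤ (n : ℝ))
    (hprod : δ ≤ ∏ i ∈ Finset.Ico t k, (x - i) / ((n : ℝ) - i)) :
    δ ^ ((s : ℝ) / ((k : ℝ) - (t : ℝ))) ≤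
      ∏ i ∈ Finset.range s, (x - i) / ((n : ℝ) - i) := by
  set f : ℕ → ℝ := fun i => (x - i) / ((n : ℝ) - i) with hf
  have hfpos : ∀ i, i < k → 0 < f i := by
    intro i hi
    have h1 : (i : ℝ) < n := by
      exact_mod_cast lt_of_lt_of_le hi hkn
    have h2 : (i : ℝ) < k := by exact_mod_cast hi
    apply div_pos <;> linarith
  have hfanti : ∀ i j, i ≤ j → j < k → f j ≤ f i := by
    intro i j hij hj
    have hin : (i : ℝ) < n := by
      exact_mod_cast lt_of_lt_of_le (lt_of_le_of_lt hij hj) hkn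
    have hjn : (j : ℝ) < n := by
      exact_mod_cast lt_of_lt_of_le hj hkn
    have hijR : (i : ℝ) ≤ j := by exact_mod_cast hij
    rw [hf, div_le_div_iff₀ (by linarith) (by linarith)]
    nlinarith [mul_nonneg (sub_nonneg.mpr hijR) (sub_nonneg.mpr hx2)]
  set g : ℕ → ℝ := fun i => Real.log (f i) with hg
  have hganti : ∀ i j, i ≤ j → j < k → g j ≤ g i :=
    fun i j hij hj => Real.log_le_log (hfpos j hj) (hfanti i j hij hj)
  -- pairwise lemma
  have pair : ∀ a b c : ℕ, a ≤ b → b ≤ c → c ≤ k →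
      ((b : ℝ) - a) * ∑ i ∈ Finset.Ico b c, g i ≤
        ((c : ℝ) - b) * ∑ i ∈ Finset.Ico a b, g i := by
    intro a b c hab hbc hck
    rcases eq_or_lt_of_le hbc with rfl | hbc'
    · simp
    have hbk : b < k := lt_of_lt_of_le hbc' hck
    have h1 : ∑ i ∈ Finset.Ico b c, g i ≤ ((c : ℝ) - b) * g b := by
      have : ∑ i ∈ Finset.Ico b c, g i ≤ ∑ _i ∈ Finset.Ico b c, g b :=
        Finset.sum_le_sum fun i hi => by
          have := Finset.mem_Ico.mp hi
          exact hganti b i this.1 (lt_of_lt_of_le this.2 hck)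
      rw [Finset.sum_const, Nat.card_Ico] at this
      rw [show ((c : ℝ) - b) = ((c - b : ℕ) : ℝ) by
        push_cast [Nat.cast_sub (le_of_lt hbc')]; ring]
      simpa [nsmul_eq_mul] using this
    have h2 : ((b : ℝ) - a) * g b ≤ ∑ i ∈ Finset.Ico a b, g i := by
      have : ∑ _i ∈ Finset.Ico a b, g b ≤ ∑ i ∈ Finset.Ico a b, g i :=
        Finset.sum_le_sum fun i hi => by
          have := Finset.mem_Ico.mp hi
          exact hganti i b (le_of_lt this.2) hbk
      rw [Finset.sum_const, Nat.card_Ico] at this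
      rw [show ((b : ℝ) - a) = ((b - a : ℕ) : ℝ) by
        push_cast [Nat.cast_sub hab]; ring]
      simpa [nsmul_eq_mul] using this
    have hba : (0 : ℝ) ≤ (b : ℝ) - a := by
      have : (a : ℝ) ≤ b := by exact_mod_cast hab
      linarith
    have hcb : (0 : ℝ) ≤ (c : ℝ) - b := by
      have : (b : ℝ) ≤ c := by exact_mod_cast hbc
      linarith
    calc ((b : ℝ) - a) * ∑ i ∈ Finset.Ico b c, g i
        ≤ ((b : ℝ) - a) * (((c : ℝ) - b) * g b) :=
          mul_le_mul_of_nonneg_left h1 hba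
      _ = ((c : ℝ) - b) * (((b : ℝ) - a) * g b) := by ring
      _ ≤ ((c : ℝ) - b) * ∑ i ∈ Finset.Ico a b, g i :=
          mul_le_mul_of_nonneg_left h2 hcb
  -- main sum inequality
  have htkR : (t : ℝ) < k := by exact_mod_cast lt_of_lt_of_le (Nat.lt_succ_self t) htk
  have hskR : (s : ℝ) ≤ k := by exact_mod_cast hsk
  have hsR : (0 : ℝ) < s := by exact_mod_cast hs
  have htR : (0 : ℝ) < t := by exact_mod_cast ht
  have main : (s : ℝ) * ∑ i ∈ Finset.Ico t k, g i ≤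
      ((k : ℝ) - t) * ∑ i ∈ Finset.range s, g i := by
    rw [← Nat.Ico_zero_eq_range]
    rcases le_or_gt s t with hst | hts
    · -- s ≤ t, so s < k
      have hsk' : s < k := lt_of_le_of_lt hst (by omega)
      have P1 := pair 0 s k (Nat.zero_le s) (le_of_lt hsk') le_rfl
      have P2 := pair s t k hst (by omega) le_rfl
      have hsplit : ∑ i ∈ Finset.Ico s k, g i =
          ∑ i ∈ Finset.Ico s t, g i + ∑ i ∈ Finset.Ico t k, g i :=
        (Finset.sum_Ico_consecutive _ hst (by omega)).symm
      rw [hsplit] at P1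
      simp only [Nat.cast_zero, sub_zero] at P1 P2
      have hktR : (0 : ℝ) ≤ (k : ℝ) - t := by linarith
      have h1 := mul_le_mul_of_nonneg_left P1 hktR
      have h2 := mul_le_mul_of_nonneg_left P2 (le_of_lt hsR)
      have hksR : (0 : ℝ) < (k : ℝ) - s := by
        have : (s : ℝ) < k := by exact_mod_cast hsk'
        linarith
      nlinarith [h1, h2]
    · -- t < s
      have P1 := pair 0 t k (Nat.zero_le t) (by omega) le_rfl
      have P2 := pair t s k (le_of_lt hts) hsk le_rfl
      have hsplit1 : ∑ i ∈ Finset.Ico 0 s, g i =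
          ∑ i ∈ Finset.Ico 0 t, g i + ∑ i ∈ Finset.Ico t s, g i :=
        (Finset.sum_Ico_consecutive _ (Nat.zero_le t) (le_of_lt hts)).symm
      have hsplit2 : ∑ i ∈ Finset.Ico t k, g i =
          ∑ i ∈ Finset.Ico t s, g i + ∑ i ∈ Finset.Ico s k, g i :=
        (Finset.sum_Ico_consecutive _ (le_of_lt hts) hsk).symm
      rw [hsplit1, hsplit2]
      rw [hsplit2] at P1
      simp only [Nat.cast_zero, sub_zero] at P1 P2
      nlinarith [P1, P2]
  -- conclude
  rcases eq_or_lt_of_le hδ0 with rfl | hδpos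
  · rw [Real.zero_rpow (ne_of_gt (div_pos hsR (by linarith)))]
    exact le_of_lt (Finset.prod_pos fun i hi =>
      hfpos i (lt_of_lt_of_le (Finset.mem_range.mp hi) hsk))
  have hlog : Real.log δ ≤ ∑ i ∈ Finset.Ico t k, g i := by
    rw [hg]
    rw [← Real.log_prod fun i hi =>
      ne_of_gt (hfpos i (Finset.mem_Ico.mp hi).2)]
    exact Real.log_le_log hδpos hprod
  have hprodpos : ∀ i ∈ Finset.range s, 0 < f i := fun i hi =>
    hfpos i (lt_of_lt_of_le (Finset.mem_range.mp hi) hsk)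
  have hRHS : ∏ i ∈ Finset.range s, f i =
      Real.exp (∑ i ∈ Finset.range s, g i) := by
    rw [Real.exp_sum]
    exact (Finset.prod_congr rfl fun i hi =>
      (Real.exp_log (hprodpos i hi)).symm)
  rw [hRHS, Real.rpow_def_of_pos hδpos]
  apply Real.exp_le_exp.mpr
  rw [mul_comm, div_mul_eq_mul_div, div_le_iff₀ (by linarith : (0:ℝ) < (k:ℝ) - t)]
  nlinarith [mul_le_mul_of_nonneg_left hlog (le_of_lt hsR), main]
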